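/- Let a, T, D be real with a ≠ 0, and W(y) = Dy² - aTy + a² > 0 on an interval containing [y₁, y₀] with y₁ < 0 < y₀ and y₁ solving the Poincaré half-map characterization ∫_{y₁}^{y₀} -y/W(y) dy = cT, where c = 0 if a > 0 and c = 2π/(D√(4D-T²)) if a < 0 (assuming 4D - T² > 0 in that case). If T > 0 then y₀ + y₁ < 0, if T < 0 then y₀ + y₁ > 0, and if T = 0 then y₁ = -y₀. -/

import Mathlib

open Real Set Filter intervalIntegral
open MeasureTheory (volume)

lemma Wpos_all (a T D : ℝ) (hD : 0 < D) (hdisc : 0 < 4*D - T^2) (ha : a ≠ 0) (y : ℝ) :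
    0 < D * y ^ 2 - a * T * y + a ^ 2 := by
  nlinarith [sq_nonneg (2*D*y - a*T),
    mul_pos (pow_pos (abs_pos.mpr ha) 2) hdisc, sq_abs a, sq_nonneg a]

lemma hasDerivAt_F (a T D s : ℝ) (hD : 0 < D) (hdisc : 0 < 4*D - T^2) (ha : a ≠ 0)
    (hs : s = |a| * Real.sqrt (4*D - T^2)) (y : ℝ) :
    HasDerivAt (fun y => (-(1/(2*D))) * Real.log (D * y ^ 2 - a * T * y + a ^ 2)
      - (a*T/(D*s)) * Real.arctan ((2*D*y - a*T)/s))
      (-y / (D * y ^ 2 - a * T * y + a ^ 2)) y := by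
  have hWy : 0 < D * y ^ 2 - a * T * y + a ^ 2 := Wpos_all a T D hD hdisc ha y
  have hspos : 0 < s := by
    rw [hs]; exact mul_pos (abs_pos.mpr ha) (Real.sqrt_pos.mpr hdisc)
  have hs2 : s^2 = a^2 * (4*D - T^2) := by
    rw [hs, mul_pow, sq_abs, Real.sq_sqrt hdisc.le]
  have h1 : HasDerivAt (fun y => D * y ^ 2 - a * T * y + a ^ 2) (2*D*y - a*T) y := by
    have := (((hasDerivAt_pow 2 y).const_mul D).sub ((hasDerivAt_id y).const_mul (a*T))).add_const (a^2)
    exact this.congr_deriv (by ring)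
  have h2 := h1.log hWy.ne'
  have h3 : HasDerivAt (fun y => (2*D*y - a*T)/s) (2*D/s) y := by
    have := (((hasDerivAt_id y).const_mul (2*D)).sub_const (a*T)).div_const s
    exact this.congr_deriv (by ring)
  have h4 : HasDerivAt (fun y => Real.arctan ((2*D*y - a*T)/s))
      ((1 / (1 + ((2*D*y - a*T)/s) ^ 2)) * (2*D/s)) y :=
    h3.arctan
  have h5 := (h2.const_mul (-(1/(2*D)))).sub (h4.const_mul (a*T/(D*s)))
  refine h5.congr_deriv ?_
  have hint : 1 + ((2*D*y - a*T)/s) ^ 2 = 4*D*(D * y ^ 2 - a * T * y + a ^ 2)/s^2 := by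
    field_simp
    linear_combination hs2
  rw [hint]
  have h4D : (4:ℝ)*D*(D * y ^ 2 - a * T * y + a ^ 2) ≠ 0 := by positivity
  field_simp
  ring

lemma F_diff_lt (a T D s : ℝ) (ha : a < 0) (hT : 0 < T) (hdisc : 0 < 4*D - T^2)
    (hs : s = |a| * Real.sqrt (4*D - T^2)) (u : ℝ) (hu : 0 ≤ u) :
    ((-(1/(2*D))) * Real.log (D * u ^ 2 - a * T * u + a ^ 2)
      - (a*T/(D*s)) * Real.arctan ((2*D*u - a*T)/s))
    - ((-(1/(2*D))) * Real.log (D * (-u) ^ 2 - a * T * (-u) + a ^ 2)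
      - (a*T/(D*s)) * Real.arctan ((2*D*(-u) - a*T)/s))
    < 2 * π / (D * Real.sqrt (4*D - T^2)) * T := by
  have hD : 0 < D := by nlinarith
  set E := Real.sqrt (4*D - T^2) with hE
  have hEpos : 0 < E := Real.sqrt_pos.mpr hdisc
  have hspos : 0 < s := by rw [hs]; exact mul_pos (abs_pos.mpr ha.ne) hEpos
  have haabs : |a| = -a := abs_of_neg ha
  have hWu : 0 < D * u ^ 2 - a * T * u + a ^ 2 := Wpos_all a T D hD hdisc ha.ne u
  have hWmu : 0 < D * (-u) ^ 2 - a * T * (-u) + a ^ 2 := Wpos_all a T D hD hdisc ha.ne (-u)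
  have hle : D * (-u) ^ 2 - a * T * (-u) + a ^ 2 ≤ D * u ^ 2 - a * T * u + a ^ 2 := by
    nlinarith [mul_nonneg (mul_nonneg (neg_nonneg.mpr ha.le) hT.le) hu]
  have hlog : Real.log (D * (-u) ^ 2 - a * T * (-u) + a ^ 2)
      ≤ Real.log (D * u ^ 2 - a * T * u + a ^ 2) := Real.log_le_log hWmu hle
  have hkneg : a*T/(D*s) < 0 :=
    div_neg_of_neg_of_pos (mul_neg_of_neg_of_pos ha hT) (mul_pos hD hspos)
  have hdiffπ : Real.arctan ((2*D*u - a*T)/s) - Real.arctan ((2*D*(-u) - a*T)/s) < π := by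
    have h1 := Real.arctan_lt_pi_div_two ((2*D*u - a*T)/s)
    have h2 := Real.neg_pi_div_two_lt_arctan ((2*D*(-u) - a*T)/s)
    linarith
  have hmul : (-(a*T/(D*s))) * (Real.arctan ((2*D*u - a*T)/s) - Real.arctan ((2*D*(-u) - a*T)/s))
      < (-(a*T/(D*s))) * π := mul_lt_mul_of_pos_left hdiffπ (by linarith)
  have hval : (-(a*T/(D*s))) * π = π * T / (D * E) := by
    rw [hs, haabs]
    field_simp
    ring_nf
    field_simp [ha.ne, hD.ne', hEpos.ne']
  have hhalf : 0 < π * T / (D * E) := by positivity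
  have hcT : 2 * π / (D * E) * T = 2 * (π * T / (D * E)) := by ring
  have hlogterm : (-(1/(2*D))) * Real.log (D * u ^ 2 - a * T * u + a ^ 2)
      - (-(1/(2*D))) * Real.log (D * (-u) ^ 2 - a * T * (-u) + a ^ 2) ≤ 0 := by
    have : 0 < 1/(2*D) := by positivity
    nlinarith
  rw [hcT]
  nlinarith [hmul, hval]

lemma key (a T D c y₀ y₁ : ℝ) (ha : a ≠ 0)
    (hWpos : ∀ y ∈ Set.Icc y₁ y₀, 0 < D * y ^ 2 - a * T * y + a ^ 2)
    (h₁ : y₁ < 0) (h₀ : 0 < y₀)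
    (hc_pos : 0 < a → c = 0)
    (hc_neg : a < 0 → 4 * D - T ^ 2 > 0 ∧ c = 2 * π / (D * Real.sqrt (4 * D - T ^ 2)))
    (hchar : (∫ y in y₁..y₀, -y / (D * y ^ 2 - a * T * y + a ^ 2)) = c * T)
    (hT : 0 < T) : y₀ + y₁ < 0 := by
  by_contra hcon
  push_neg at hcon
  have hu0 : 0 < -y₁ := by linarith
  have huy : -y₁ ≤ y₀ := by linarith
  have hy₁y₀ : y₁ ≤ y₀ := by linarith
  have hWcont : Continuous (fun y : ℝ => D*y^2 - a*T*y + a^2) := by continuity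
  have hcont : ContinuousOn (fun y : ℝ => -y / (D*y^2 - a*T*y + a^2)) (Icc y₁ y₀) :=
    ContinuousOn.div (continuous_id.neg.continuousOn) hWcont.continuousOn
      (fun y hy => (hWpos y hy).ne')
  have hintsub : ∀ p q : ℝ, p ∈ Icc y₁ y₀ → q ∈ Icc y₁ y₀ →
      IntervalIntegrable (fun y : ℝ => -y / (D*y^2-a*T*y+a^2)) volume p q := by
    intro p q hp hq
    have hsub : uIcc p q ⊆ Icc y₁ y₀ := by
      rw [← Set.uIcc_of_le hy₁y₀]
      exact Set.uIcc_subset_uIcc (by rwa [Set.uIcc_of_le hy₁y₀]) (by rwa [Set.uIcc_of_le hy₁y₀])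
    exact (hcont.mono hsub).intervalIntegrable
  have hmem₁ : y₁ ∈ Icc y₁ y₀ := ⟨le_rfl, hy₁y₀⟩
  have hmemu : -y₁ ∈ Icc y₁ y₀ := ⟨by linarith, huy⟩
  have hmem₀ : y₀ ∈ Icc y₁ y₀ := ⟨hy₁y₀, le_rfl⟩
  have hmem0 : (0:ℝ) ∈ Icc y₁ y₀ := ⟨h₁.le, h₀.le⟩
  have hsplit := integral_add_adjacent_intervals
    (hintsub y₁ (-y₁) hmem₁ hmemu) (hintsub (-y₁) y₀ hmemu hmem₀)
  have hterm2 : (∫ y in (-y₁)..y₀, -y / (D*y^2-a*T*y+a^2)) ≤ 0 := by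
    have h0 : 0 ≤ ∫ y in (-y₁)..y₀, -(-y / (D*y^2-a*T*y+a^2)) := by
      apply integral_nonneg huy
      intro x hx
      have hWx := hWpos x ⟨by linarith [hx.1], hx.2⟩
      have : -x / (D*x^2-a*T*x+a^2) ≤ 0 :=
        div_nonpos_of_nonpos_of_nonneg (by linarith [hx.1]) hWx.le
      linarith
    rw [integral_neg] at h0
    linarith
  have hge : c*T ≤ ∫ y in y₁..(-y₁), -y / (D*y^2-a*T*y+a^2) := by
    rw [← hchar, ← hsplit]; linarith
  rcases ha.lt_or_gt with haneg | hapos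
  · obtain ⟨hdisc, hcval⟩ := hc_neg haneg
    have hD : 0 < D := by nlinarith
    set s := |a| * Real.sqrt (4*D - T^2) with hs
    have hftc := integral_eq_sub_of_hasDerivAt
      (f := fun y => (-(1/(2*D))) * Real.log (D * y ^ 2 - a * T * y + a ^ 2)
        - (a*T/(D*s)) * Real.arctan ((2*D*y - a*T)/s))
      (f' := fun y : ℝ => -y / (D*y^2-a*T*y+a^2))
      (a := y₁) (b := -y₁)
      (fun x _ => hasDerivAt_F a T D s hD hdisc haneg.ne hs x)
      (Continuous.intervalIntegrable
        (Continuous.div continuous_id.neg hWcont (fun y => (Wpos_all a T D hD hdisc ha y).ne')) _ _)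
    have hineq := F_diff_lt a T D s haneg hT hdisc hs (-y₁) hu0.le
    rw [neg_neg] at hineq
    rw [hcval] at hge
    rw [hftc] at hge
    linarith
  · have hc0 := hc_pos hapos
    rw [hc0, zero_mul] at hge
    have h1 := hintsub y₁ 0 hmem₁ hmem0
    have h2 := hintsub 0 (-y₁) hmem0 hmemu
    have hsplit2 := integral_add_adjacent_intervals h1 h2
    have hneg1 : (∫ y in y₁..(0:ℝ), -y / (D*y^2-a*T*y+a^2))
        = ∫ x in (0:ℝ)..(-y₁), (fun y : ℝ => -y / (D*y^2-a*T*y+a^2)) (-x) := by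
      have h := integral_comp_neg (a := (0:ℝ)) (b := -y₁) (fun y : ℝ => -y / (D*y^2-a*T*y+a^2))
      rw [neg_neg, neg_zero] at h
      exact h.symm
    have hintc : IntervalIntegrable
        (fun x : ℝ => (fun y : ℝ => -y / (D*y^2-a*T*y+a^2)) (-x)) volume 0 (-y₁) := by
      apply ContinuousOn.intervalIntegrable
      apply hcont.comp (continuous_neg.continuousOn)
      intro x hx
      rw [Set.uIcc_of_le hu0.le] at hx
      have : -x ∈ Icc y₁ y₀ := ⟨by linarith [hx.2], by linarith [hx.1]⟩
      simpa using this
    have hadd := integral_add hintc h2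
    have hformula : EqOn
        (fun x : ℝ => (fun y : ℝ => -y / (D*y^2-a*T*y+a^2)) (-x) + -x / (D*x^2-a*T*x+a^2))
        (fun x : ℝ => -(2*a*T*x^2 / ((D*x^2-a*T*x+a^2)*(D*x^2+a*T*x+a^2))))
        (uIcc 0 (-y₁)) := by
      intro x hx
      rw [Set.uIcc_of_le hu0.le] at hx
      have hWx := hWpos x ⟨by linarith [hx.1], le_trans hx.2 huy⟩
      have hWmx := hWpos (-x) ⟨by linarith [hx.2], by linarith [hx.1]⟩
      have hWmx' : 0 < D*x^2 + a*T*x + a^2 := by nlinarith [hWmx]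
      show (-(-x)) / (D*(-x)^2 - a*T*(-x) + a^2) + -x / (D*x^2-a*T*x+a^2) = _
      rw [show D*(-x)^2 - a*T*(-x) + a^2 = D*x^2 + a*T*x + a^2 from by ring]
      beta_reduce
      rw [div_add_div _ _ hWmx'.ne' hWx.ne', neg_div', div_eq_div_iff (mul_ne_zero hWmx'.ne' hWx.ne') (mul_ne_zero hWx.ne' hWmx'.ne')]
      ring
    have hlt : (∫ x in (0:ℝ)..(-y₁),
        ((fun y : ℝ => -y / (D*y^2-a*T*y+a^2)) (-x) + -x / (D*x^2-a*T*x+a^2))) < 0 := by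
      rw [integral_congr hformula, integral_neg]
      have hpos : 0 < ∫ x in (0:ℝ)..(-y₁),
          2*a*T*x^2 / ((D*x^2-a*T*x+a^2)*(D*x^2+a*T*x+a^2)) := by
        apply intervalIntegral_pos_of_pos_on _ _ hu0
        · apply ContinuousOn.intervalIntegrable
          apply ContinuousOn.div (by fun_prop) (by fun_prop)
          intro x hx
          rw [Set.uIcc_of_le hu0.le] at hx
          have hWx := hWpos x ⟨by linarith [hx.1], le_trans hx.2 huy⟩
          have hWmx := hWpos (-x) ⟨by linarith [hx.2], by linarith [hx.1]⟩
          have : 0 < D*x^2 + a*T*x + a^2 := by nlinarith [hWmx]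
          positivity
        · intro x hx
          have hWx := hWpos x ⟨by linarith [hx.1.le], le_trans hx.2.le huy⟩
          have hWmx := hWpos (-x) ⟨by linarith [hx.2.le], by linarith [hx.1.le]⟩
          have h5 : 0 < D*x^2 + a*T*x + a^2 := by nlinarith [hWmx]
          have hx1 := hx.1
          positivity
      linarith
    rw [hadd, ← hneg1, hsplit2] at hlt
    linarith

lemma integral_odd_zero (g : ℝ → ℝ) (hodd : ∀ x, g (-x) = -g x) (v : ℝ)
    (h1 : IntervalIntegrable g MeasureTheory.volume (-v) 0)
    (h2 : IntervalIntegrable g MeasureTheory.volume 0 v) :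
    ∫ x in (-v)..v, g x = 0 := by
  rw [← integral_add_adjacent_intervals h1 h2]
  have h := integral_comp_neg (a := (0:ℝ)) (b := v) g
  rw [neg_zero] at h
  have h2' : (∫ x in (0:ℝ)..v, g (-x)) = ∫ x in (0:ℝ)..v, -(g x) :=
    integral_congr fun x _ => hodd x
  rw [h2', integral_neg] at h
  linarith

lemma key0 (a D y₀ y₁ : ℝ)
    (hWpos : ∀ y ∈ Set.Icc y₁ y₀, 0 < D * y ^ 2 + a ^ 2)
    (h₁ : y₁ < 0) (h₀ : 0 < y₀)
    (hchar : (∫ y in y₁..y₀, -y / (D * y ^ 2 + a ^ 2)) = 0) : y₁ = -y₀ := by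
  have hy₁y₀ : y₁ ≤ y₀ := by linarith
  have hWcont : Continuous (fun y : ℝ => D*y^2 + a^2) := by continuity
  have hcont : ContinuousOn (fun y : ℝ => -y / (D*y^2 + a^2)) (Icc y₁ y₀) :=
    ContinuousOn.div (continuous_id.neg.continuousOn) hWcont.continuousOn
      (fun y hy => (hWpos y hy).ne')
  have hintsub : ∀ p q : ℝ, p ∈ Icc y₁ y₀ → q ∈ Icc y₁ y₀ →
      IntervalIntegrable (fun y : ℝ => -y / (D*y^2+a^2)) MeasureTheory.volume p q := by
    intro p q hp hq
    have hsub : uIcc p q ⊆ Icc y₁ y₀ := by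
      rw [← Set.uIcc_of_le hy₁y₀]
      exact Set.uIcc_subset_uIcc (by rwa [Set.uIcc_of_le hy₁y₀]) (by rwa [Set.uIcc_of_le hy₁y₀])
    exact (hcont.mono hsub).intervalIntegrable
  have hmem₁ : y₁ ∈ Icc y₁ y₀ := ⟨le_rfl, hy₁y₀⟩
  have hmem₀ : y₀ ∈ Icc y₁ y₀ := ⟨hy₁y₀, le_rfl⟩
  have hmem0 : (0:ℝ) ∈ Icc y₁ y₀ := ⟨h₁.le, h₀.le⟩
  have hodd : ∀ x : ℝ, (fun y : ℝ => -y / (D*y^2+a^2)) (-x)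
      = -((fun y : ℝ => -y / (D*y^2+a^2)) x) := by
    intro x
    show (-(-x)) / (D*(-x)^2 + a^2) = -(-x / (D*x^2+a^2))
    rw [show D*(-x)^2 + a^2 = D*x^2 + a^2 from by ring, neg_neg, neg_div, neg_neg]
  rcases lt_trichotomy y₁ (-y₀) with hlt | heq | hgt
  · exfalso
    have hmemm : -y₀ ∈ Icc y₁ y₀ := ⟨hlt.le, by linarith⟩
    have hsplit := integral_add_adjacent_intervals
      (hintsub y₁ (-y₀) hmem₁ hmemm) (hintsub (-y₀) y₀ hmemm hmem₀)
    have hzero := integral_odd_zero _ hodd y₀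
      (hintsub (-y₀) 0 hmemm hmem0) (hintsub 0 y₀ hmem0 hmem₀)
    have hpos : 0 < ∫ y in y₁..(-y₀), -y / (D*y^2+a^2) := by
      apply intervalIntegral_pos_of_pos_on (hintsub y₁ (-y₀) hmem₁ hmemm) _ hlt
      intro x hx
      have hWx := hWpos x ⟨hx.1.le, by linarith [hx.2]⟩
      exact div_pos (by linarith [hx.2]) hWx
    rw [hchar] at hsplit
    rw [hzero] at hsplit
    linarith
  · exact heq
  · exfalso
    have hu : -y₁ < y₀ := by linarith
    have hmemm : -y₁ ∈ Icc y₁ y₀ := ⟨by linarith, hu.le⟩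
    have hsplit := integral_add_adjacent_intervals
      (hintsub y₁ (-y₁) hmem₁ hmemm) (hintsub (-y₁) y₀ hmemm hmem₀)
    have hzero := integral_odd_zero _ hodd (-y₁)
      (hintsub (-(-y₁)) 0 (by rwa [neg_neg]) hmem0) (hintsub 0 (-y₁) hmem0 hmemm)
    rw [neg_neg] at hzero
    have hneg : 0 < ∫ y in (-y₁)..y₀, -(-y / (D*y^2+a^2)) := by
      apply intervalIntegral_pos_of_pos_on _ _ hu
      · apply IntervalIntegrable.neg
        exact hintsub (-y₁) y₀ hmemm hmem₀
      · intro x hx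
        have hWx := hWpos x ⟨by linarith [hx.1], hx.2.le⟩
        have : -x / (D*x^2+a^2) < 0 := div_neg_of_neg_of_pos (by linarith [hx.1]) hWx
        linarith
    rw [integral_neg] at hneg
    rw [hchar] at hsplit
    rw [hzero] at hsplit
    linarith

theorem relative_position (a T D c y₀ y₁ : ℝ) (ha : a ≠ 0)
    (W : ℝ → ℝ) (hW : ∀ y, W y = D * y ^ 2 - a * T * y + a ^ 2)
    (hWpos : ∀ y ∈ Set.Icc y₁ y₀, 0 < W y)
    (h₁ : y₁ < 0) (h₀ : 0 < y₀)
    (hc_pos : 0 < a → c = 0)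
    (hc_neg : a < 0 → 4 * D - T ^ 2 > 0 ∧ c = 2 * π / (D * Real.sqrt (4 * D - T ^ 2)))
    (hchar : (∫ y in y₁..y₀, -y / W y) = c * T) :
    (0 < T → y₀ + y₁ < 0) ∧ (T < 0 → 0 < y₀ + y₁) ∧ (T = 0 → y₁ = -y₀) := by
  have hWf : W = fun y => D * y ^ 2 - a * T * y + a ^ 2 := funext hW
  subst hWf
  simp only [] at hWpos hchar
  refine ⟨fun hT => key a T D c y₀ y₁ ha hWpos h₁ h₀ hc_pos hc_neg hchar hT,
    fun hT => ?_, fun hT => ?_⟩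
  · have hWpos' : ∀ z ∈ Set.Icc (-y₀) (-y₁), 0 < D * z ^ 2 - a * (-T) * z + a ^ 2 := by
      intro z hz
      have h := hWpos (-z) ⟨by linarith [hz.2], by linarith [hz.1]⟩
      have he : D * z ^ 2 - a * (-T) * z + a ^ 2
          = D * (-z) ^ 2 - a * T * (-z) + a ^ 2 := by ring
      rw [he]; exact h
    have hc_neg' : a < 0 → 4 * D - (-T) ^ 2 > 0
        ∧ c = 2 * π / (D * Real.sqrt (4 * D - (-T) ^ 2)) := by
      intro h
      have := hc_neg h
      rwa [show (-T : ℝ) ^ 2 = T ^ 2 from by ring]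
    have hchar' : (∫ z in (-y₀)..(-y₁), -z / (D * z ^ 2 - a * (-T) * z + a ^ 2))
        = c * (-T) := by
      have h := integral_comp_neg (a := -y₀) (b := -y₁)
        (fun y : ℝ => -y / (D * y ^ 2 - a * T * y + a ^ 2))
      rw [neg_neg, neg_neg, hchar] at h
      have hcg : (∫ z in (-y₀)..(-y₁), -z / (D * z ^ 2 - a * (-T) * z + a ^ 2))
          = ∫ z in (-y₀)..(-y₁), -(- -z / (D * (-z) ^ 2 - a * T * (-z) + a ^ 2)) := by
        apply integral_congr
        intro z _
        show -z / (D * z ^ 2 - a * (-T) * z + a ^ 2)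
          = -(- -z / (D * (-z) ^ 2 - a * T * (-z) + a ^ 2))
        rw [show D * (-z) ^ 2 - a * T * (-z) + a ^ 2
          = D * z ^ 2 - a * (-T) * z + a ^ 2 from by ring, neg_neg, neg_div]
      rw [hcg, integral_neg, h]
      ring
    have := key a (-T) D c (-y₁) (-y₀) ha hWpos' (by linarith) (by linarith)
      hc_pos hc_neg' hchar' (by linarith)
    linarith
  · subst hT
    simp only [mul_zero, zero_mul, sub_zero] at hWpos hchar
    exact key0 a D y₀ y₁ hWpos h₁ h₀ hchar
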